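/- Let G be a minimally rigid graph and v a vertex of type 2. If v is changed to a type 1 vertex, the resulting graph is rigid (contains a spanning minimally rigid subgraph). -/

import Mathlib

open SimpleGraph

variable {V : Type*}

/-- Number of type-1 vertices in a vertex set. -/
noncomputable def n1 (t1 : V → Prop) (S : Set V) : ℕ := {v ∈ S | t1 v}.ncard

/-- Number of type-2 vertices in a vertex set. -/
noncomputable def n2 (t1 : V → Prop) (S : Set V) : ℕ := {v ∈ S | ¬ t1 v}.ncard

/-- Number of edges of `G` with both endpoints in `S`. -/
noncomputable def edgesIn (G : SimpleGraph V) (S : Set V) : ℕ :=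
  {e ∈ G.edgeSet | ∀ v ∈ e, v ∈ S}.ncard

/-- Sparsity: every subgraph on `n' ≥ 2` vertices has at most
`n₁' + 2 n₂' + min 0 (n₁' - 3)` edges. -/
def Sparse (G : SimpleGraph V) (t1 : V → Prop) : Prop :=
  ∀ S : Set V, 2 ≤ S.ncard →
    (edgesIn G S : ℤ) ≤ (n1 t1 S : ℤ) + 2 * n2 t1 S + min 0 ((n1 t1 S : ℤ) - 3)

/-- Minimal rigidity: either one vertex, or sparse with exactly
`n₁ + 2 n₂ + min 0 (n₁ - 3)` edges. -/
def MinRigid (G : SimpleGraph V) (t1 : V → Prop) : Prop :=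
  Nat.card V = 1 ∨
    (Sparse G t1 ∧
      (G.edgeSet.ncard : ℤ) = (n1 t1 Set.univ : ℤ) + 2 * n2 t1 Set.univ +
        min 0 ((n1 t1 Set.univ : ℤ) - 3))

/-- Rigidity: contains a spanning minimally rigid subgraph. -/
def Rigid (G : SimpleGraph V) (t1 : V → Prop) : Prop :=
  ∃ H : SimpleGraph V, H ≤ G ∧ MinRigid H t1

/-- A rigid block: a vertex-induced rigid subgraph, identified with its vertex set. -/
def RigidBlock (G : SimpleGraph V) (t1 : V → Prop) (S : Set V) : Prop :=
  Rigid (G.induce S) (fun v => t1 ↑v)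

section Aux

variable [Fintype V]

private lemma sep_modular (t : V → Prop) (S T : Set V) :
    {w ∈ S ∩ T | t w}.ncard + {w ∈ S ∪ T | t w}.ncard
      = {w ∈ S | t w}.ncard + {w ∈ T | t w}.ncard := by
  have h1 : {w ∈ S ∩ T | t w} = {w ∈ S | t w} ∩ {w ∈ T | t w} := by
    ext w; simp only [Set.mem_setOf_eq, Set.mem_inter_iff]; tauto
  have h2 : {w ∈ S ∪ T | t w} = {w ∈ S | t w} ∪ {w ∈ T | t w} := by
    ext w; simp only [Set.mem_setOf_eq, Set.mem_union]; tauto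
  rw [h1, h2, Set.ncard_inter_add_ncard_union _ _ (Set.toFinite _) (Set.toFinite _)]

private lemma n1_modular (t1 : V → Prop) (S T : Set V) :
    n1 t1 (S ∩ T) + n1 t1 (S ∪ T) = n1 t1 S + n1 t1 T :=
  sep_modular t1 S T

private lemma n2_modular (t1 : V → Prop) (S T : Set V) :
    n2 t1 (S ∩ T) + n2 t1 (S ∪ T) = n2 t1 S + n2 t1 T :=
  sep_modular (fun w => ¬ t1 w) S T

private lemma n1_mono (t1 : V → Prop) {S T : Set V} (h : S ⊆ T) :
    n1 t1 S ≤ n1 t1 T :=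
  Set.ncard_le_ncard (fun w hw => ⟨h hw.1, hw.2⟩) (Set.toFinite _)

private lemma n1_le_ncard (t1 : V → Prop) (S : Set V) : n1 t1 S ≤ S.ncard :=
  Set.ncard_le_ncard (Set.sep_subset _ _) (Set.toFinite _)

private lemma n1_add_n2 (t1 : V → Prop) (S : Set V) :
    n1 t1 S + n2 t1 S = S.ncard := by
  unfold n1 n2
  rw [← Set.ncard_union_eq (by
      simp only [Set.disjoint_left, Set.mem_sep_iff]
      tauto) (Set.toFinite _) (Set.toFinite _)]
  congr 1
  ext w
  simp only [Set.mem_union, Set.mem_sep_iff]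
  tauto

private lemma n1_or_mem (t1 : V → Prop) (v : V) (hv : ¬ t1 v) {S : Set V} (hvS : v ∈ S) :
    n1 (fun w => t1 w ∨ w = v) S = n1 t1 S + 1 := by
  unfold n1
  have h : {w ∈ S | t1 w ∨ w = v} = insert v {w ∈ S | t1 w} := by
    ext w
    simp only [Set.mem_sep_iff, Set.mem_insert_iff]
    constructor
    · rintro ⟨hwS, ht | rfl⟩
      · exact Or.inr ⟨hwS, ht⟩
      · exact Or.inl rfl
    · rintro (rfl | ⟨hwS, ht⟩)
      · exact ⟨hvS, Or.inr rfl⟩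
      · exact ⟨hwS, Or.inl ht⟩
  rw [h, Set.ncard_insert_of_notMem (by simp [hv]) (Set.toFinite _)]

private lemma n2_or_mem (t1 : V → Prop) (v : V) (hv : ¬ t1 v) {S : Set V} (hvS : v ∈ S) :
    n2 t1 S = n2 (fun w => t1 w ∨ w = v) S + 1 := by
  unfold n2
  have h : {w ∈ S | ¬ t1 w} = insert v {w ∈ S | ¬ (t1 w ∨ w = v)} := by
    ext w
    simp only [Set.mem_sep_iff, Set.mem_insert_iff, not_or]
    by_cases hw : w = v
    · subst hw; tauto
    · tauto
  rw [h, Set.ncard_insert_of_notMem (by simp) (Set.toFinite _)]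

private lemma n1_or_notmem (t1 : V → Prop) (v : V) {S : Set V} (hvS : v ∉ S) :
    n1 (fun w => t1 w ∨ w = v) S = n1 t1 S := by
  unfold n1
  congr 1
  ext w
  simp only [Set.mem_sep_iff]
  constructor
  · rintro ⟨hwS, ht | rfl⟩
    · exact ⟨hwS, ht⟩
    · exact absurd hwS hvS
  · rintro ⟨hwS, ht⟩; exact ⟨hwS, Or.inl ht⟩

private lemma n2_or_notmem (t1 : V → Prop) (v : V) {S : Set V} (hvS : v ∉ S) :
    n2 (fun w => t1 w ∨ w = v) S = n2 t1 S := by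
  unfold n2
  congr 1
  ext w
  simp only [Set.mem_sep_iff, not_or]
  constructor
  · rintro ⟨hwS, ht, _⟩; exact ⟨hwS, ht⟩
  · rintro ⟨hwS, ht⟩
    exact ⟨hwS, ht, fun hh => hvS (hh ▸ hwS)⟩

private lemma edgesIn_supermod (G : SimpleGraph V) (S T : Set V) :
    edgesIn G S + edgesIn G T ≤ edgesIn G (S ∩ T) + edgesIn G (S ∪ T) := by
  unfold edgesIn
  have h1 : {e ∈ G.edgeSet | ∀ w ∈ e, w ∈ S ∩ T}
      = {e ∈ G.edgeSet | ∀ w ∈ e, w ∈ S} ∩ {e ∈ G.edgeSet | ∀ w ∈ e, w ∈ T} := by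
    ext e
    simp only [Set.mem_sep_iff, Set.mem_inter_iff]
    constructor
    · rintro ⟨he, hw⟩
      exact ⟨⟨he, fun w hw' => (hw w hw').1⟩, ⟨he, fun w hw' => (hw w hw').2⟩⟩
    · rintro ⟨⟨he, hS⟩, ⟨_, hT⟩⟩
      exact ⟨he, fun w hw' => ⟨hS w hw', hT w hw'⟩⟩
  have h2 : {e ∈ G.edgeSet | ∀ w ∈ e, w ∈ S} ∪ {e ∈ G.edgeSet | ∀ w ∈ e, w ∈ T}
      ⊆ {e ∈ G.edgeSet | ∀ w ∈ e, w ∈ S ∪ T} := by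
    rintro e (⟨he, hw⟩ | ⟨he, hw⟩)
    · exact ⟨he, fun w hw' => Or.inl (hw w hw')⟩
    · exact ⟨he, fun w hw' => Or.inr (hw w hw')⟩
  calc {e ∈ G.edgeSet | ∀ w ∈ e, w ∈ S}.ncard + {e ∈ G.edgeSet | ∀ w ∈ e, w ∈ T}.ncard
      = ({e ∈ G.edgeSet | ∀ w ∈ e, w ∈ S} ∩ {e ∈ G.edgeSet | ∀ w ∈ e, w ∈ T}).ncard
        + ({e ∈ G.edgeSet | ∀ w ∈ e, w ∈ S} ∪ {e ∈ G.edgeSet | ∀ w ∈ e, w ∈ T}).ncard := by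
        rw [Set.ncard_inter_add_ncard_union _ _ (Set.toFinite _) (Set.toFinite _)]
    _ ≤ _ := by
        rw [← h1]
        exact Nat.add_le_add_left (Set.ncard_le_ncard h2 (Set.toFinite _)) _

private lemma two_le_ncard_of_edgesIn_pos (G : SimpleGraph V) (U : Set V)
    (h : 0 < edgesIn G U) : 2 ≤ U.ncard := by
  unfold edgesIn at h
  obtain ⟨e, heG, hw⟩ := (Set.ncard_pos (Set.toFinite _)).mp h
  revert heG hw
  induction e using Sym2.ind with
  | _ a b =>
    intro heG hw
    have hadj : G.Adj a b := heG
    have hab : a ≠ b := G.ne_of_adj hadj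
    have hsub : ({a, b} : Set V) ⊆ U := by
      rintro w (rfl | rfl)
      · exact hw _ (Sym2.mem_mk_left _ _)
      · exact hw _ (Sym2.mem_mk_right _ _)
    calc 2 = ({a, b} : Set V).ncard := (Set.ncard_pair hab).symm
      _ ≤ U.ncard := Set.ncard_le_ncard hsub (Set.toFinite _)

private lemma edgesIn_univ (G : SimpleGraph V) :
    edgesIn G Set.univ = G.edgeSet.ncard := by
  unfold edgesIn
  congr 1
  ext e
  simp

private lemma edgesIn_delete_set (G : SimpleGraph V) (e0 : Sym2 V) (U : Set V) :
    {e ∈ (G.deleteEdges {e0}).edgeSet | ∀ w ∈ e, w ∈ U}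
      = {e ∈ G.edgeSet | ∀ w ∈ e, w ∈ U} \ {e0} := by
  rw [SimpleGraph.edgeSet_deleteEdges]
  ext e
  simp only [Set.mem_setOf_eq, Set.mem_diff, Set.mem_singleton_iff]
  tauto

private lemma edgesIn_delete_mem (G : SimpleGraph V) (e0 : Sym2 V)
    (he : e0 ∈ G.edgeSet) (U : Set V) (hcond : ∀ w ∈ e0, w ∈ U) :
    (edgesIn (G.deleteEdges {e0}) U : ℤ) = (edgesIn G U : ℤ) - 1 := by
  unfold edgesIn
  rw [edgesIn_delete_set]
  have hmem : e0 ∈ {e ∈ G.edgeSet | ∀ w ∈ e, w ∈ U} := ⟨he, hcond⟩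
  rw [Set.ncard_diff_singleton_of_mem hmem]
  have h1 : 0 < {e ∈ G.edgeSet | ∀ w ∈ e, w ∈ U}.ncard :=
    (Set.ncard_pos (Set.toFinite _)).mpr ⟨e0, hmem⟩
  omega

private lemma edgesIn_delete_notmem (G : SimpleGraph V) (e0 : Sym2 V)
    (U : Set V) (hcond : ¬ ∀ w ∈ e0, w ∈ U) :
    edgesIn (G.deleteEdges {e0}) U = edgesIn G U := by
  unfold edgesIn
  rw [edgesIn_delete_set]
  rw [Set.diff_singleton_eq_self (fun hmem => hcond hmem.2)]

private lemma edgesIn_delete_le (G : SimpleGraph V) (e0 : Sym2 V) (U : Set V) :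
    edgesIn (G.deleteEdges {e0}) U ≤ edgesIn G U := by
  unfold edgesIn
  rw [edgesIn_delete_set]
  exact Set.ncard_le_ncard Set.diff_subset (Set.toFinite _)

/-- Critical set: contains `v`, has at least three type-1 vertices, and is tight. -/
private def Crit (G : SimpleGraph V) (t1 : V → Prop) (v : V) (S : Set V) : Prop :=
  v ∈ S ∧ 3 ≤ n1 t1 S ∧
    (edgesIn G S : ℤ) = (n1 t1 S : ℤ) + 2 * n2 t1 S + min 0 ((n1 t1 S : ℤ) - 3)

end Aux

/-- If `G` is minimally rigid and `v` is a type-2 vertex, changing `v` to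
type 1 keeps the graph rigid. -/
theorem stmt7 {V : Type*} [Fintype V] (G : SimpleGraph V) (t1 : V → Prop)
    (v : V) (hv : ¬ t1 v) (h : MinRigid G t1) :
    Rigid G (fun w => t1 w ∨ w = v) := by
  classical
  rcases h with hone | ⟨hsp, hcount⟩
  · exact ⟨G, le_rfl, Or.inl hone⟩
  by_cases hbig : 3 ≤ n1 t1 (Set.univ : Set V)
  · -- many type-1 vertices: delete one edge inside the minimal critical set
    have hEuniv := edgesIn_univ G
    have hCuniv : Crit G t1 v Set.univ :=
      ⟨Set.mem_univ v, hbig, by rw [hEuniv]; exact hcount⟩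
    have hinterCrit : ∀ S T : Set V, Crit G t1 v S → Crit G t1 v T → Crit G t1 v (S ∩ T) := by
      rintro S T ⟨hvS, hn1S, htS⟩ ⟨hvT, hn1T, htT⟩
      have hsup := edgesIn_supermod G S T
      have hm1 := n1_modular t1 S T
      have hm2 := n2_modular t1 S T
      have hmono : n1 t1 S ≤ n1 t1 (S ∪ T) := n1_mono t1 Set.subset_union_left
      have hUcard : 2 ≤ (S ∪ T).ncard := by
        have := n1_le_ncard t1 (S ∪ T); omega
      have hspU := hsp (S ∪ T) hUcard
      have hIcard : 2 ≤ (S ∩ T).ncard := by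
        by_contra hI
        push_neg at hI
        have hE0 : edgesIn G (S ∩ T) = 0 := by
          by_contra h0
          have := two_le_ncard_of_edgesIn_pos G (S ∩ T) (Nat.pos_of_ne_zero h0)
          omega
        have hIeq := n1_add_n2 t1 (S ∩ T)
        have hv1 : 0 < (S ∩ T).ncard :=
          (Set.ncard_pos (Set.toFinite _)).mpr ⟨v, hvS, hvT⟩
        omega
      have hspI := hsp (S ∩ T) hIcard
      refine ⟨⟨hvS, hvT⟩, ?_, ?_⟩ <;> omega
    set crits : Set ℕ := {n | ∃ S : Set V, Crit G t1 v S ∧ S.ncard = n} with hcrits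
    have hne : crits.Nonempty := ⟨_, Set.univ, hCuniv, rfl⟩
    obtain ⟨S0, hS0c, hS0card⟩ : sInf crits ∈ crits := Nat.sInf_mem hne
    have hS0sub : ∀ T : Set V, Crit G t1 v T → S0 ⊆ T := by
      intro T hT
      have hc := hinterCrit S0 T hS0c hT
      have hle : sInf crits ≤ (S0 ∩ T).ncard := Nat.sInf_le ⟨S0 ∩ T, hc, rfl⟩
      have heq : S0 ∩ T = S0 :=
        Set.eq_of_subset_of_ncard_le Set.inter_subset_left (by omega) (Set.toFinite _)
      intro w hw
      rw [← heq] at hw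
      exact hw.2
    obtain ⟨hvS0, hn1S0, htS0⟩ := hS0c
    have hpos : 0 < edgesIn G S0 := by omega
    obtain ⟨e0, he0G, he0S0⟩ : {e ∈ G.edgeSet | ∀ w ∈ e, w ∈ S0}.Nonempty := by
      rw [← Set.ncard_pos (Set.toFinite _)]
      exact hpos
    refine ⟨G.deleteEdges {e0}, SimpleGraph.deleteEdges_le _, Or.inr ⟨?_, ?_⟩⟩
    · intro S hS
      have hG := hsp S hS
      have hdel := edgesIn_delete_le G e0 S
      by_cases hvS : v ∈ S
      · have e1 := n1_or_mem t1 v hv hvS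
        have e2 := n2_or_mem t1 v hv hvS
        by_cases hb : 3 ≤ n1 t1 S
        · by_cases htight :
            (edgesIn G S : ℤ) = (n1 t1 S : ℤ) + 2 * n2 t1 S + min 0 ((n1 t1 S : ℤ) - 3)
          · have hsub := hS0sub S ⟨hvS, hb, htight⟩
            have hcond : ∀ w ∈ e0, w ∈ S := fun w hw => hsub (he0S0 w hw)
            have hdel' := edgesIn_delete_mem G e0 he0G S hcond
            omega
          · omega
        · omega
      · rw [n1_or_notmem t1 v hvS, n2_or_notmem t1 v hvS]
        omega
    · have hdel := edgesIn_delete_mem G e0 he0G Set.univ (fun w _ => Set.mem_univ w)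
      have hEuniv' := edgesIn_univ (G.deleteEdges {e0})
      have e1 := n1_or_mem t1 v hv (Set.mem_univ v)
      have e2 := n2_or_mem t1 v hv (Set.mem_univ v)
      rw [← hEuniv']
      rw [hEuniv] at hdel
      omega
  · -- at most two type-1 vertices: `G` itself works
    refine ⟨G, le_rfl, Or.inr ⟨?_, ?_⟩⟩
    · intro S hS
      have hG := hsp S hS
      by_cases hvS : v ∈ S
      · have e1 := n1_or_mem t1 v hv hvS
        have e2 := n2_or_mem t1 v hv hvS
        have e3 : n1 t1 S ≤ n1 t1 Set.univ := n1_mono t1 (Set.subset_univ S)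
        omega
      · rw [n1_or_notmem t1 v hvS, n2_or_notmem t1 v hvS]
        exact hG
    · have e1 := n1_or_mem t1 v hv (Set.mem_univ v)
      have e2 := n2_or_mem t1 v hv (Set.mem_univ v)
      omega
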